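/- Let K be a field of characteristic zero and let A_1 and A_2 be finite-dimensional (not necessarily associative) K-algebras. If A_1 ⊗_K K' ≅ A_2 ⊗_K K' as K'-algebras for some field extension K' of K, then there exists a finite field extension K'' of K such that A_1 ⊗_K K'' ≅ A_2 ⊗_K K'' as K''-algebras. -/

import Mathlib

set_option maxRecDepth 8000
set_option maxHeartbeats 1000000
set_option synthInstance.maxHeartbeats 100000

open TensorProduct

/-- `A₁ ⊗_K K'` and `A₂ ⊗_K K'` are isomorphic as `K'`-algebras: there is a `K'`-linear
bijection between the base changes which preserves multiplication. -/
def IsIsoAfterBaseChange (K : Type*) [Field K]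
    (A₁ A₂ : Type*) [NonUnitalNonAssocRing A₁] [Module K A₁]
    [SMulCommClass K A₁ A₁] [IsScalarTower K A₁ A₁]
    [NonUnitalNonAssocRing A₂] [Module K A₂]
    [SMulCommClass K A₂ A₂] [IsScalarTower K A₂ A₂]
    (K' : Type*) [Field K'] [Algebra K K'] : Prop :=
  ∃ e : (K' ⊗[K] A₁) ≃ₗ[K'] (K' ⊗[K] A₂), ∀ x y : K' ⊗[K] A₁, e (x * y) = e x * e y

section Aux

variable {K : Type*} [Field K]

/-- Structure constants of a (not necessarily associative) algebra w.r.t. a basis. -/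
noncomputable def structC {A : Type*} [NonUnitalNonAssocRing A] [Module K A]
    {n : ℕ} (b : Module.Basis (Fin n) K A) (i j k : Fin n) : K :=
  b.repr (b i * b j) k

/-- The polynomial system (over `K`) expressing that a matrix intertwines two sets of
structure constants. -/
def SolMat {n : ℕ} (c₁ c₂ : Fin n → Fin n → Fin n → K) (R : Type*) [CommRing R]
    [Algebra K R] (m : Matrix (Fin n) (Fin n) R) : Prop :=
  ∀ i j k : Fin n, ∑ l, algebraMap K R (c₁ i j l) * m k l
      = ∑ p, ∑ q, m p i * m q j * algebraMap K R (c₂ p q k)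

lemma solMat_map {n : ℕ} {c₁ c₂ : Fin n → Fin n → Fin n → K} {R R' : Type*} [CommRing R]
    [Algebra K R] [CommRing R'] [Algebra K R'] (φ : R →ₐ[K] R')
    {m : Matrix (Fin n) (Fin n) R} (h : SolMat c₁ c₂ R m) :
    SolMat c₁ c₂ R' (fun i j => φ (m i j)) := by
  intro i j k
  have := congrArg φ (h i j k)
  simpa [map_sum, map_mul, AlgHom.commutes] using this

lemma solMat_of_injective {n : ℕ} {c₁ c₂ : Fin n → Fin n → Fin n → K} {R R' : Type*}
    [CommRing R] [Algebra K R] [CommRing R'] [Algebra K R'] (φ : R →ₐ[K] R')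
    (hφ : Function.Injective φ) {m : Matrix (Fin n) (Fin n) R}
    (h : SolMat c₁ c₂ R' (fun i j => φ (m i j))) : SolMat c₁ c₂ R m := by
  intro i j k
  apply hφ
  have := h i j k
  simpa [map_sum, map_mul, AlgHom.commutes] using this

variable {A : Type*} [NonUnitalNonAssocRing A] [Module K A]
  [SMulCommClass K A A] [IsScalarTower K A A]

lemma baseChange_basis_mul (F : Type*) [Field F] [Algebra K F] {n : ℕ}
    (b : Module.Basis (Fin n) K A) (i j : Fin n) :
    (b.baseChange F i) * (b.baseChange F j)
      = ∑ k, algebraMap K F (structC b i j k) • b.baseChange F k := by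
  have hb : b i * b j = ∑ k, structC b i j k • b k := (b.sum_repr _).symm
  simp only [Module.Basis.baseChange_apply, Algebra.TensorProduct.tmul_mul_tmul, one_mul, hb,
    TensorProduct.tmul_sum, TensorProduct.tmul_smul, algebraMap_smul]

variable {A₂ : Type*} [NonUnitalNonAssocRing A₂] [Module K A₂]
  [SMulCommClass K A₂ A₂] [IsScalarTower K A₂ A₂]

lemma sum3_comm {n : ℕ} {β : Type*} [AddCommMonoid β] (g : Fin n → Fin n → Fin n → β) :
    ∑ p, ∑ q, ∑ k, g p q k = ∑ k, ∑ p, ∑ q, g p q k :=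
  calc ∑ p, ∑ q, ∑ k, g p q k = ∑ p, ∑ k, ∑ q, g p q k :=
        Finset.sum_congr rfl fun _ _ => Finset.sum_comm
    _ = ∑ k, ∑ p, ∑ q, g p q k := Finset.sum_comm

lemma expand_lincomb_mul (F : Type*) [Field F] [Algebra K F] {n : ℕ}
    (b₂ : Module.Basis (Fin n) K A₂) (m : Matrix (Fin n) (Fin n) F) (i j : Fin n) :
    (∑ p, m p i • b₂.baseChange F p) * (∑ q, m q j • b₂.baseChange F q)
      = ∑ k, (∑ p, ∑ q, m p i * m q j * algebraMap K F (structC b₂ p q k)) •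
          b₂.baseChange F k := by
  rw [Finset.sum_mul]
  simp only [Finset.mul_sum, smul_mul_assoc, mul_smul_comm, smul_smul,
    baseChange_basis_mul F b₂, Finset.smul_sum]
  rw [sum3_comm]
  simp only [Finset.sum_smul]
  refine Finset.sum_congr rfl fun k _ => Finset.sum_congr rfl fun p _ =>
    Finset.sum_congr rfl fun q _ => ?_
  congr 1
  ring

lemma mul_expand {n : ℕ} {F T : Type*} [Field F] [NonUnitalNonAssocSemiring T]
    [Module F T] [SMulCommClass F T T] [IsScalarTower F T T]
    (u v : Fin n → F) (a b : Fin n → T) :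
    (∑ i, u i • a i) * (∑ j, v j • b j) = ∑ i, ∑ j, (u i * v j) • (a i * b j) := by
  rw [Finset.sum_mul]
  refine Finset.sum_congr rfl fun i _ => ?_
  rw [smul_mul_assoc, Finset.mul_sum, Finset.smul_sum]
  refine Finset.sum_congr rfl fun j _ => ?_
  rw [mul_smul_comm, smul_smul]

lemma expand_map_basis_mul {A₁ : Type*} [NonUnitalNonAssocRing A₁] [Module K A₁]
    [SMulCommClass K A₁ A₁] [IsScalarTower K A₁ A₁]
    (F : Type*) [Field F] [Algebra K F] {n : ℕ}
    (b₁ : Module.Basis (Fin n) K A₁) (b₂ : Module.Basis (Fin n) K A₂)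
    (f : (F ⊗[K] A₁) →ₗ[F] (F ⊗[K] A₂)) (m : Matrix (Fin n) (Fin n) F)
    (hf : ∀ l, f (b₁.baseChange F l) = ∑ k, m k l • b₂.baseChange F k) (i j : Fin n) :
    f (b₁.baseChange F i * b₁.baseChange F j)
      = ∑ k, (∑ l, algebraMap K F (structC b₁ i j l) * m k l) • b₂.baseChange F k := by
  rw [baseChange_basis_mul F b₁, map_sum]
  simp only [map_smul, hf, Finset.smul_sum, smul_smul]
  rw [Finset.sum_comm]
  simp only [← Finset.sum_smul]

lemma coeff_eq_of_sum_eq {F : Type*} [Field F] [Algebra K F] {n : ℕ}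
    (b₂ : Module.Basis (Fin n) K A₂) {c d : Fin n → F}
    (h : ∑ k, c k • b₂.baseChange F k = ∑ k, d k • b₂.baseChange F k) : c = d := by
  have h1 := Module.Basis.repr_sum_self (b₂.baseChange F) c
  have h2 := Module.Basis.repr_sum_self (b₂.baseChange F) d
  rw [h] at h1
  exact h1.symm.trans h2

variable {A₁ : Type*} [NonUnitalNonAssocRing A₁] [Module K A₁]
  [SMulCommClass K A₁ A₁] [IsScalarTower K A₁ A₁]

/-- From an isomorphism after base change, extract an invertible solution matrix. -/
lemma exists_solMat_of_isIso {n : ℕ} (b₁ : Module.Basis (Fin n) K A₁) (b₂ : Module.Basis (Fin n) K A₂)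
    (F : Type*) [Field F] [Algebra K F] (h : IsIsoAfterBaseChange K A₁ A₂ F) :
    ∃ m : Matrix (Fin n) (Fin n) F, IsUnit m.det ∧ SolMat (structC b₁) (structC b₂) F m := by
  obtain ⟨e, he⟩ := h
  set B₁ := b₁.baseChange F with hB₁
  set B₂ := b₂.baseChange F with hB₂
  set m := LinearMap.toMatrix B₁ B₂ e.toLinearMap with hm
  set m' := LinearMap.toMatrix B₂ B₁ e.symm.toLinearMap with hm'
  have hcomp : e.toLinearMap.comp e.symm.toLinearMap = LinearMap.id :=
    LinearMap.ext fun x => e.apply_symm_apply x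
  have hmm' : m * m' = 1 := by
    rw [hm, hm', ← LinearMap.toMatrix_comp B₂ B₁ B₂, hcomp, LinearMap.toMatrix_id]
  have hdet : IsUnit m.det := by
    apply IsUnit.of_mul_eq_one m'.det
    rw [← Matrix.det_mul, hmm', Matrix.det_one]
  refine ⟨m, hdet, ?_⟩
  have hf : ∀ l, e (B₁ l) = ∑ k, m k l • B₂ k := by
    intro l
    have : Matrix.toLin B₁ B₂ m (B₁ l) = ∑ k, m k l • B₂ k := Matrix.toLin_self B₁ B₂ m l
    rwa [hm, Matrix.toLin_toMatrix] at this
  intro i j k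
  have h1 : e (B₁ i * B₁ j)
      = ∑ k, (∑ l, algebraMap K F (structC b₁ i j l) * m k l) • B₂ k :=
    expand_map_basis_mul F b₁ b₂ e.toLinearMap m hf i j
  have h2 : e (B₁ i) * e (B₁ j)
      = ∑ k, (∑ p, ∑ q, m p i * m q j * algebraMap K F (structC b₂ p q k)) • B₂ k := by
    rw [hf i, hf j]
    exact expand_lincomb_mul F b₂ m i j
  have := coeff_eq_of_sum_eq b₂ (h1.symm.trans ((he (B₁ i) (B₁ j)).trans h2))
  exact congrFun this k

/-- From an invertible solution matrix, build an isomorphism after base change. -/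
lemma isIso_of_solMat {n : ℕ} (b₁ : Module.Basis (Fin n) K A₁) (b₂ : Module.Basis (Fin n) K A₂)
    (F : Type*) [Field F] [Algebra K F] (m : Matrix (Fin n) (Fin n) F)
    (hdet : IsUnit m.det) (hsol : SolMat (structC b₁) (structC b₂) F m) :
    IsIsoAfterBaseChange K A₁ A₂ F := by
  set B₁ := b₁.baseChange F with hB₁
  set B₂ := b₂.baseChange F with hB₂
  set f := Matrix.toLin B₁ B₂ m with hfdef
  set g := Matrix.toLin B₂ B₁ m⁻¹ with hgdef
  have h1 : f.comp g = LinearMap.id := by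
    rw [hfdef, hgdef, ← Matrix.toLin_mul B₂ B₁ B₂, Matrix.mul_nonsing_inv m hdet,
      Matrix.toLin_one]
  have h2 : g.comp f = LinearMap.id := by
    rw [hfdef, hgdef, ← Matrix.toLin_mul B₁ B₂ B₁, Matrix.nonsing_inv_mul m hdet,
      Matrix.toLin_one]
  refine ⟨LinearEquiv.ofLinear f g h1 h2, ?_⟩
  have hf : ∀ l, f (B₁ l) = ∑ k, m k l • B₂ k := fun l => Matrix.toLin_self B₁ B₂ m l
  have key : ∀ i j, f (B₁ i * B₁ j) = f (B₁ i) * f (B₁ j) := by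
    intro i j
    rw [expand_map_basis_mul F b₁ b₂ f m hf i j, hf i, hf j, expand_lincomb_mul F b₂ m i j]
    exact Finset.sum_congr rfl fun k _ => by rw [hsol i j k]
  -- bilinearity reduction
  intro x y
  show f (x * y) = f x * f y
  have hx : x = ∑ i, B₁.repr x i • B₁ i := (B₁.sum_repr x).symm
  have hy : y = ∑ j, B₁.repr y j • B₁ j := (B₁.sum_repr y).symm
  obtain ⟨u, hu⟩ : ∃ u : Fin n → F, x = ∑ i, u i • B₁ i := ⟨B₁.repr x, hx⟩
  obtain ⟨v, hv⟩ : ∃ v : Fin n → F, y = ∑ j, v j • B₁ j := ⟨B₁.repr y, hy⟩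
  have step1 : (∑ i, u i • B₁ i) * (∑ j, v j • B₁ j)
      = ∑ i, ∑ j, (u i * v j) • (B₁ i * B₁ j) := mul_expand u v _ _
  have step2 : f (∑ i, u i • B₁ i) * f (∑ j, v j • B₁ j)
      = ∑ i, ∑ j, (u i * v j) • (f (B₁ i) * f (B₁ j)) := by
    rw [map_sum, map_sum]
    simp only [map_smul]
    exact mul_expand u v _ _
  rw [hu, hv, step1, step2, map_sum]
  refine Finset.sum_congr rfl fun i _ => by
    rw [map_sum]
    exact Finset.sum_congr rfl fun j _ => by rw [map_smul, key i j]

end Aux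

/-- Let `K` be a field of characteristic zero and `A₁`, `A₂` finite-dimensional (not
necessarily associative or unital) `K`-algebras.  If `A₁ ⊗_K K' ≅ A₂ ⊗_K K'` as
`K'`-algebras for some field extension `K'` of `K`, then there is a finite field extension
`K''` of `K` with `A₁ ⊗_K K'' ≅ A₂ ⊗_K K''` as `K''`-algebras. -/
theorem iso_after_finite_base_change (K : Type*) [Field K] [CharZero K]
    (A₁ A₂ : Type*) [NonUnitalNonAssocRing A₁] [Module K A₁]
    [SMulCommClass K A₁ A₁] [IsScalarTower K A₁ A₁] [FiniteDimensional K A₁]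
    [NonUnitalNonAssocRing A₂] [Module K A₂]
    [SMulCommClass K A₂ A₂] [IsScalarTower K A₂ A₂] [FiniteDimensional K A₂]
    (K' : Type*) [Field K'] [Algebra K K']
    (hiso : IsIsoAfterBaseChange K A₁ A₂ K') :
    ∃ K'' : IntermediateField K (AlgebraicClosure K),
      FiniteDimensional K K'' ∧ IsIsoAfterBaseChange K A₁ A₂ K'' := by
  classical
  -- the two algebras have the same dimension
  have hrank : Module.finrank K A₂ = Module.finrank K A₁ := by
    obtain ⟨e, -⟩ := hiso
    have h1 : Module.finrank K' (K' ⊗[K] A₁) = Module.finrank K A₁ :=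
      Module.finrank_baseChange
    have h2 : Module.finrank K' (K' ⊗[K] A₂) = Module.finrank K A₂ :=
      Module.finrank_baseChange
    rw [← h1, ← h2, e.finrank_eq]
  set n := Module.finrank K A₁ with hn
  set b₁ : Module.Basis (Fin n) K A₁ := Module.finBasis K A₁ with hb₁
  set b₂ : Module.Basis (Fin n) K A₂ := (Module.finBasis K A₂).reindex (finCongr hrank) with hb₂
  obtain ⟨m, hdet, hsol⟩ := exists_solMat_of_isIso b₁ b₂ K' hiso
  have hdetne : m.det ≠ 0 := hdet.ne_zero
  -- the finitely generated subalgebra containing the entries and the inverse determinant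
  set s : Set K' := Set.range (fun p : Fin n × Fin n => m p.1 p.2) ∪ {m.det⁻¹} with hs
  have hsfin : s.Finite := (Set.finite_range _).union (Set.finite_singleton _)
  set S := Algebra.adjoin K s with hS
  haveI : Algebra.FiniteType K S :=
    (Subalgebra.fg_iff_finiteType S).mp (Subalgebra.fg_def.mpr ⟨s, hsfin, rfl⟩)
  -- the matrix with entries in S
  set mS : Matrix (Fin n) (Fin n) S :=
    fun i j => ⟨m i j, Algebra.subset_adjoin (Or.inl ⟨(i, j), rfl⟩)⟩ with hmS
  have hval : ∀ i j, (S.val (mS i j) : K') = m i j := fun i j => rfl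
  have hsolS : SolMat (structC b₁) (structC b₂) S mS := by
    apply solMat_of_injective S.val Subtype.coe_injective
    have : (fun i j => S.val (mS i j)) = m := by
      funext i j; exact hval i j
    rw [this]; exact hsol
  set dinv : S := ⟨m.det⁻¹, Algebra.subset_adjoin (Or.inr rfl)⟩ with hdinv
  have hSdet : mS.det * dinv = 1 := by
    apply Subtype.coe_injective
    push_cast
    have : (S.val mS.det : K') = m.det := by
      rw [S.val.map_det]
      congr 1
    calc (↑(mS.det * dinv) : K') = S.val mS.det * m.det⁻¹ := rfl
      _ = m.det * m.det⁻¹ := by rw [this]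
      _ = 1 := mul_inv_cancel₀ hdetne
  -- a maximal ideal of S and the quotient field
  haveI : Nontrivial S := inferInstance
  obtain ⟨M, hM⟩ := Ideal.exists_maximal S
  haveI := hM
  letI : Field (S ⧸ M) := Ideal.Quotient.field M
  haveI : Algebra.FiniteType K (S ⧸ M) :=
    Algebra.FiniteType.of_surjective (Ideal.Quotient.mkₐ K M)
      (Ideal.Quotient.mkₐ_surjective K M)
  haveI : Module.Finite K (S ⧸ M) := finite_of_finite_type_of_isJacobsonRing K (S ⧸ M)
  haveI : NoZeroSMulDivisors K (S ⧸ M) :=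
    inferInstance
  haveI : Algebra.IsAlgebraic K (S ⧸ M) := Algebra.IsAlgebraic.of_finite K (S ⧸ M)
  -- embed the quotient into the algebraic closure
  let ψ : (S ⧸ M) →ₐ[K] AlgebraicClosure K := IsAlgClosed.lift
  let φ : S →ₐ[K] AlgebraicClosure K := ψ.comp (Ideal.Quotient.mkₐ K M)
  set m₀ : Matrix (Fin n) (Fin n) (AlgebraicClosure K) := fun i j => φ (mS i j) with hm₀
  have hsol₀ : SolMat (structC b₁) (structC b₂) (AlgebraicClosure K) m₀ := solMat_map φ hsolS
  have hdet₀ : IsUnit m₀.det := by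
    apply IsUnit.of_mul_eq_one (φ dinv)
    have : m₀.det = φ mS.det := by
      rw [hm₀, φ.map_det]
      rfl
    rw [this, ← map_mul, hSdet, map_one]
  -- the finite extension generated by the entries of m₀
  set t : Set (AlgebraicClosure K) := Set.range (fun p : Fin n × Fin n => m₀ p.1 p.2) with ht
  haveI : Finite t := (Set.finite_range _).to_subtype
  set K'' : IntermediateField K (AlgebraicClosure K) := IntermediateField.adjoin K t with hK''
  haveI hfinK'' : FiniteDimensional K K'' := by
    apply IntermediateField.finiteDimensional_adjoin
    intro x _
    exact (Algebra.IsAlgebraic.isAlgebraic x).isIntegral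
  refine ⟨K'', hfinK'', ?_⟩
  -- the matrix with entries in K''
  set m₁ : Matrix (Fin n) (Fin n) K'' :=
    fun i j => ⟨m₀ i j, IntermediateField.subset_adjoin K t ⟨(i, j), rfl⟩⟩ with hm₁
  have hval₁ : (fun i j => K''.val (m₁ i j)) = m₀ := by
    funext i j; rfl
  have hsol₁ : SolMat (structC b₁) (structC b₂) K'' m₁ := by
    apply solMat_of_injective K''.val Subtype.coe_injective
    rw [hval₁]; exact hsol₀
  have hdet₁ : IsUnit m₁.det := by
    have hd : K''.val m₁.det = m₀.det := by
      rw [K''.val.map_det]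
      congr 1
    rw [isUnit_iff_ne_zero]
    intro h
    rw [h, map_zero] at hd
    exact hdet₀.ne_zero hd.symm
  exact isIso_of_solMat b₁ b₂ K'' m₁ hdet₁ hsol₁
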